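/- arXiv:1307.1529 — 2 statements merged into one kernel-verified Lean document; each statement's English description precedes it below -/
import Mathlib

section
/- Let K be a convex body in ℝ² and α ≥ 0. Then the (lower Lebesgue) integral over ℝ² of the function x ↦ per(K ∩ (K + x)) + α·vol(K ∩ (K + x)) equals vol(K)·(2·per(K) + α·vol(K)), as an identity in the extended nonnegative reals. (Theorem 3.1(II) for the valuation φ = Euclidean perimeter + α·volume.) -/
open MeasureTheory Set Metric
open scoped Pointwise ENNReal Real Topology NNReal

noncomputable section

lemma hausdorff_translate (x : EuclideanSpace ℝ (Fin 2)) (s : Set (EuclideanSpace ℝ (Fin 2)))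
    (hs : MeasurableSet s) : μH[1] ((· + x) '' s) = μH[1] s := by
  set e : EuclideanSpace ℝ (Fin 2) ≃ᵢ EuclideanSpace ℝ (Fin 2) := IsometryEquiv.constVAdd x with he
  have himg : (· + x) '' s = ⇑e.symm ⁻¹' s := by
    ext y
    simp only [he, IsometryEquiv.constVAdd_symm, mem_preimage, IsometryEquiv.constVAdd_apply,
      vadd_eq_add, mem_image]
    constructor
    · rintro ⟨z, hz, rfl⟩; simpa [add_comm, ← add_assoc] using hz
    · intro h; exact ⟨-x + y, h, by abel⟩
  rw [himg]
  exact (e.symm.measurePreserving_hausdorffMeasure 1).measure_preimage hs.nullMeasurableSet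

lemma sphere_hausdorff_lt_top (R : ℝ) :
    μH[1] (sphere (0 : EuclideanSpace ℝ (Fin 2)) R) < ⊤ := by
  set e : ℂ ≃ᵢ EuclideanSpace ℝ (Fin 2) :=
    (Complex.isometryOfOrthonormal (EuclideanSpace.basisFun (Fin 2) ℝ)).toIsometryEquiv with he
  have h1 : sphere (0 : EuclideanSpace ℝ (Fin 2)) R = e '' sphere (e.symm 0) R := by
    rw [e.image_sphere, e.apply_symm_apply]
  have h0 : e.symm 0 = 0 := by simp [he]
  rw [h1, h0]
  have h2 : μH[1] (e '' sphere (0:ℂ) R) = μH[1] (sphere (0:ℂ) R) := by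
    rw [← e.preimage_symm]
    exact (e.symm.measurePreserving_hausdorffMeasure 1).measure_preimage
      (isClosed_sphere.measurableSet).nullMeasurableSet
  rw [h2]
  rcases le_or_gt R 0 with hR | hR
  · rcases lt_or_eq_of_le hR with h | h
    · simp [sphere_eq_empty_of_neg h]
    · subst h
      haveI := MeasureTheory.Measure.noAtoms_hausdorff (X := ℂ) one_pos
      simp [sphere_zero, measure_singleton]
  · have h3 : sphere (0:ℂ) R = circleMap 0 R '' Ioc 0 (2 * π) := by
      rw [image_circleMap_Ioc, abs_of_pos hR]
    rw [h3]
    calc μH[1] (circleMap 0 R '' Ioc 0 (2 * π))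
        ≤ (Real.nnabs R : ℝ≥0∞) ^ (1:ℝ) * μH[1] (Ioc (0:ℝ) (2 * π)) :=
          (lipschitzWith_circleMap 0 R).hausdorffMeasure_image_le zero_le_one _
      _ < ⊤ := by
          rw [MeasureTheory.hausdorffMeasure_real]
          exact ENNReal.mul_lt_top (by simp) (by simp [Real.volume_Ioc]; exact ENNReal.mul_lt_top (by simp) ENNReal.ofReal_lt_top)

lemma frontier_image_addRight (x : EuclideanSpace ℝ (Fin 2)) (s : Set (EuclideanSpace ℝ (Fin 2))) :
    frontier ((· + x) '' s) = (· + x) '' frontier s := by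
  have : (· + x) '' frontier s = (Homeomorph.addRight x) '' frontier s := rfl
  rw [this, (Homeomorph.addRight x).image_frontier]
  rfl

/-- radial map used to parametrize the frontier -/
def F (C : Set (EuclideanSpace ℝ (Fin 2))) (u : EuclideanSpace ℝ (Fin 2)) :
    EuclideanSpace ℝ (Fin 2) := (gauge C u)⁻¹ • u

lemma frontier_hausdorff_lt_top_zero (C : Set (EuclideanSpace ℝ (Fin 2)))
    (hcp : IsCompact C) (hcv : Convex ℝ C) (h0 : (0:EuclideanSpace ℝ (Fin 2)) ∈ interior C) :
    μH[1] (frontier C) < ⊤ := by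
  have hnC : C ∈ 𝓝 (0 : EuclideanSpace ℝ (Fin 2)) := mem_interior_iff_mem_nhds.1 h0
  obtain ⟨r, hr0, hrC⟩ := Metric.mem_nhds_iff.1 hnC
  obtain ⟨R0, hR0⟩ := hcp.isBounded.subset_closedBall 0
  set R : ℝ := max R0 1 with hRdef
  have hR1 : (1:ℝ) ≤ R := le_max_right _ _
  have hR : 0 < R := lt_of_lt_of_le one_pos hR1
  have hRC : C ⊆ closedBall 0 R := hR0.trans (closedBall_subset_closedBall (le_max_left _ _))
  have habs : Absorbent ℝ C := absorbent_nhds_zero hnC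
  have hF : ∀ u, F C u = (gauge C u)⁻¹ • u := fun u => rfl
  -- lower/upper bounds for the gauge on the sphere
  have hglb : ∀ u : EuclideanSpace ℝ (Fin 2), ‖u‖ = 1 → R⁻¹ ≤ gauge C u := by
    intro u hu
    have := le_gauge_of_subset_closedBall (x := u) habs hR.le hRC
    rwa [hu, one_div] at this
  have hgub : ∀ u : EuclideanSpace ℝ (Fin 2), ‖u‖ = 1 → gauge C u ≤ r⁻¹ := by
    intro u hu
    have := gauge_mono (absorbent_ball_zero hr0) hrC u
    rwa [gauge_ball hr0.le, hu, one_div] at this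
  have hgpos : ∀ u : EuclideanSpace ℝ (Fin 2), ‖u‖ = 1 → 0 < gauge C u := fun u hu =>
    lt_of_lt_of_le (inv_pos.2 hR) (hglb u hu)
  -- the gauge is Lipschitz
  have hgl : LipschitzWith (⟨r, hr0.le⟩ : ℝ≥0)⁻¹ (gauge C) :=
    hcv.lipschitzWith_gauge (by exact_mod_cast hr0) hrC
  have hgl' : ∀ u v, |gauge C u - gauge C v| ≤ r⁻¹ * ‖u - v‖ := by
    intro u v
    have := hgl.dist_le_mul u v
    rw [Real.dist_eq, dist_eq_norm] at this
    refine this.trans_eq ?_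
    exact congrArg (· * ‖u - v‖) (NNReal.coe_inv _)
  -- surjectivity of F from the sphere onto the frontier
  have hsurj : frontier C ⊆ F C '' sphere 0 1 := by
    intro y hy
    have hy1 : gauge C y = 1 := (gauge_eq_one_iff_mem_frontier hcv hnC).2 hy
    have hy0 : y ≠ 0 := by
      intro h; rw [h, gauge_zero] at hy1; exact one_ne_zero hy1.symm
    have hyn : ‖y‖ ≠ 0 := norm_ne_zero_iff.2 hy0
    refine ⟨‖y‖⁻¹ • y, ?_, ?_⟩
    · simp [mem_sphere_iff_norm, norm_smul, abs_of_nonneg, inv_mul_cancel₀ hyn]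
    · have hgu : gauge C (‖y‖⁻¹ • y) = ‖y‖⁻¹ := by
        rw [gauge_smul_of_nonneg (inv_nonneg.2 (norm_nonneg y)), hy1, smul_eq_mul, mul_one]
      rw [hF]
      simp only [hgu, inv_inv, smul_smul, mul_inv_cancel₀ hyn, one_smul]
  -- Lipschitz bound for F on the sphere
  set L : ℝ≥0 := Real.toNNReal (R + R * R * r⁻¹) with hL
  have hlip : LipschitzOnWith L (F C) (sphere 0 1) := by
    rw [lipschitzOnWith_iff_dist_le_mul]
    intro u hu v hv
    rw [mem_sphere_iff_norm, sub_zero] at hu hv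
    have hgu := hgpos u hu; have hgv := hgpos v hv
    have hbu : (gauge C u)⁻¹ ≤ R := by
      rw [inv_le_comm₀ hgu hR]  -- maybe wrong name
      exact hglb u hu
    have hbv : (gauge C v)⁻¹ ≤ R := by
      rw [inv_le_comm₀ hgv hR]
      exact hglb v hv
    have key : dist (F C u) (F C v) ≤ (gauge C u)⁻¹ * ‖u - v‖ + |(gauge C u)⁻¹ - (gauge C v)⁻¹| * ‖v‖ := by
      rw [dist_eq_norm, hF, hF]
      calc ‖(gauge C u)⁻¹ • u - (gauge C v)⁻¹ • v‖
          = ‖(gauge C u)⁻¹ • (u - v) + ((gauge C u)⁻¹ - (gauge C v)⁻¹) • v‖ := by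
            congr 1; rw [smul_sub, sub_smul]; abel
        _ ≤ ‖(gauge C u)⁻¹ • (u - v)‖ + ‖((gauge C u)⁻¹ - (gauge C v)⁻¹) • v‖ := norm_add_le _ _
        _ = (gauge C u)⁻¹ * ‖u - v‖ + |(gauge C u)⁻¹ - (gauge C v)⁻¹| * ‖v‖ := by
            rw [norm_smul, norm_smul, Real.norm_eq_abs, Real.norm_eq_abs,
              abs_of_nonneg (inv_nonneg.2 hgu.le)]
    have hdiff : |(gauge C u)⁻¹ - (gauge C v)⁻¹| ≤ R * R * (r⁻¹ * ‖u - v‖) := by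
      have : (gauge C u)⁻¹ - (gauge C v)⁻¹ = (gauge C v - gauge C u) * ((gauge C u)⁻¹ * (gauge C v)⁻¹) := by
        field_simp
      rw [this, abs_mul, abs_mul]
      have h1 : |gauge C v - gauge C u| ≤ r⁻¹ * ‖u - v‖ := by
        rw [abs_sub_comm]
        simpa [norm_sub_rev] using hgl' u v
      have h2 : |(gauge C u)⁻¹| ≤ R := by rwa [abs_of_nonneg (inv_nonneg.2 hgu.le)]
      have h3 : |(gauge C v)⁻¹| ≤ R := by rwa [abs_of_nonneg (inv_nonneg.2 hgv.le)]
      calc |gauge C v - gauge C u| * (|(gauge C u)⁻¹| * |(gauge C v)⁻¹|)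
          ≤ (r⁻¹ * ‖u - v‖) * (R * R) := by
            apply mul_le_mul h1 (mul_le_mul h2 h3 (abs_nonneg _) hR.le)
              (mul_nonneg (abs_nonneg _) (abs_nonneg _))
              (mul_nonneg (inv_nonneg.2 hr0.le) (norm_nonneg _))
        _ = R * R * (r⁻¹ * ‖u - v‖) := by ring
    have : dist (F C u) (F C v) ≤ (R + R * R * r⁻¹) * ‖u - v‖ := by
      calc dist (F C u) (F C v) ≤ (gauge C u)⁻¹ * ‖u - v‖ + |(gauge C u)⁻¹ - (gauge C v)⁻¹| * ‖v‖ := key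
        _ ≤ R * ‖u - v‖ + R * R * (r⁻¹ * ‖u - v‖) * 1 := by
            apply add_le_add
            · exact mul_le_mul_of_nonneg_right hbu (norm_nonneg _)
            · rw [hv]; exact mul_le_mul_of_nonneg_right hdiff (by norm_num)
        _ = (R + R * R * r⁻¹) * ‖u - v‖ := by ring
    calc dist (F C u) (F C v) ≤ (R + R * R * r⁻¹) * ‖u - v‖ := this
      _ = L * dist u v := by
          rw [dist_eq_norm, hL, Real.coe_toNNReal]
          positivity
  -- conclude
  calc μH[1] (frontier C) ≤ μH[1] (F C '' sphere 0 1) := measure_mono hsurj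
    _ ≤ (L : ℝ≥0∞) ^ (1:ℝ) * μH[1] (sphere (0:EuclideanSpace ℝ (Fin 2)) 1) :=
        hlip.hausdorffMeasure_image_le zero_le_one
    _ < ⊤ := ENNReal.mul_lt_top (by simp) (sphere_hausdorff_lt_top 1)

lemma frontier_hausdorff_lt_top (C : Set (EuclideanSpace ℝ (Fin 2)))
    (hcp : IsCompact C) (hcv : Convex ℝ C) (hint : (interior C).Nonempty) :
    μH[1] (frontier C) < ⊤ := by
  obtain ⟨a, ha⟩ := hint
  have h1 : μH[1] (frontier C) = μH[1] ((· + (-a)) '' frontier C) :=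
    (hausdorff_translate (-a) (frontier C) isClosed_frontier.measurableSet).symm
  rw [h1, ← frontier_image_addRight]
  apply frontier_hausdorff_lt_top_zero
  · exact hcp.image (continuous_add_right (-a))
  · have : (· + (-a)) '' C = (fun z => -a + z) '' C := by
      ext y; simp [add_comm]
    rw [this]
    exact hcv.translate (-a)
  · have : (· + (-a)) '' interior C ⊆ interior ((· + (-a)) '' C) := by
      have h2 : (· + (-a)) '' C = (Homeomorph.addRight (-a)) '' C := rfl
      have h3 : (· + (-a)) '' interior C = (Homeomorph.addRight (-a)) '' interior C := rfl
      rw [h2, h3, (Homeomorph.addRight (-a)).image_interior]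
    exact this ⟨a, ha, by simp⟩

lemma key_tonelli (ν : Measure (EuclideanSpace ℝ (Fin 2))) [IsFiniteMeasure ν]
    (T : Set (EuclideanSpace ℝ (Fin 2))) (hT : MeasurableSet T) :
    ∫⁻ x, ν ((fun y => y - x) ⁻¹' T) = ν univ * volume T := by
  have hind : ∀ x y : EuclideanSpace ℝ (Fin 2),
      ((fun y => y - x) ⁻¹' T).indicator (1 : EuclideanSpace ℝ (Fin 2) → ℝ≥0∞) y = T.indicator 1 (y - x) := by
    intro x y; by_cases h : y - x ∈ T <;> simp [h]
  have hind2 : ∀ x y : EuclideanSpace ℝ (Fin 2),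
      ((fun x => y - x) ⁻¹' T).indicator (1 : EuclideanSpace ℝ (Fin 2) → ℝ≥0∞) x = T.indicator 1 (y - x) := by
    intro x y; by_cases h : y - x ∈ T <;> simp [h]
  have hunc : Measurable (Function.uncurry fun (x y : EuclideanSpace ℝ (Fin 2)) =>
      T.indicator (1 : EuclideanSpace ℝ (Fin 2) → ℝ≥0∞) (y - x)) := by
    exact (measurable_one.indicator hT).comp (measurable_snd.sub measurable_fst)
  calc ∫⁻ x, ν ((fun y => y - x) ⁻¹' T)
      = ∫⁻ x, ∫⁻ y, T.indicator 1 (y - x) ∂ν := by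
        refine lintegral_congr fun x => ?_
        rw [← lintegral_indicator_one (measurable_sub_const x hT)]
        · exact lintegral_congr fun y => (hind x y).symm
    _ = ∫⁻ y, ∫⁻ x, T.indicator 1 (y - x) ∂volume ∂ν :=
        lintegral_lintegral_swap hunc.aemeasurable
    _ = ∫⁻ y, volume T ∂ν := by
        refine lintegral_congr fun y => ?_
        rw [show (∫⁻ x, T.indicator 1 (y - x) ∂volume)
            = ∫⁻ x, ((fun x => y - x) ⁻¹' T).indicator (1 : EuclideanSpace ℝ (Fin 2) → ℝ≥0∞) x ∂volume from
          lintegral_congr fun x => (hind2 x y).symm]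
        have hms : MeasurableSet ((fun x : EuclideanSpace ℝ (Fin 2) => y - x) ⁻¹' T) := by
          apply MeasurableSet.preimage hT; fun_prop
        rw [lintegral_indicator_one hms]
        exact (Measure.measurePreserving_sub_left volume y).measure_preimage hT.nullMeasurableSet
    _ = ν univ * volume T := by rw [lintegral_const, mul_comm]

lemma key_meas (ν : Measure (EuclideanSpace ℝ (Fin 2))) [SFinite ν]
    (T : Set (EuclideanSpace ℝ (Fin 2))) (hT : MeasurableSet T) :
    Measurable (fun x => ν ((fun y => y - x) ⁻¹' T)) := by
  have : (fun x => ν ((fun y => y - x) ⁻¹' T))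
      = fun x => ∫⁻ y, T.indicator (1 : EuclideanSpace ℝ (Fin 2) → ℝ≥0∞) (y - x) ∂ν := by
    funext x
    rw [← lintegral_indicator_one (measurable_sub_const x hT)]
    refine lintegral_congr fun y => ?_
    by_cases h : y - x ∈ T <;> simp [h]
  rw [this]
  exact Measurable.lintegral_prod_right
    ((measurable_one.indicator hT).comp (measurable_snd.sub measurable_fst))

lemma frontier_inter_closed {X : Type*} [TopologicalSpace X] (A B : Set X)
    (hA : IsClosed A) (hB : IsClosed B) :
    frontier (A ∩ B) = (frontier A ∩ B) ∪ (A ∩ frontier B) := by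
  rw [frontier, interior_inter, (hA.inter hB).closure_eq,
    hA.frontier_eq, hB.frontier_eq]
  ext y
  simp only [mem_diff, mem_inter_iff, mem_union]
  tauto

end

open MeasureTheory Set
open scoped Pointwise

/-- Euclidean perimeter of a planar set: one-dimensional Hausdorff measure of its frontier. -/
noncomputable def per (A : Set (EuclideanSpace ℝ (Fin 2))) : ℝ :=
  (μH[1] (frontier A)).toReal

/-- Lebesgue volume of a planar set, as a real number. -/
noncomputable def vol (A : Set (EuclideanSpace ℝ (Fin 2))) : ℝ :=
  (volume A).toReal

/-- The integral over `ℝ²` of the `(per + α·vol)`-covariogram of a planar convex body `K`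
equals `vol K · (2 · per K + α · vol K)`. -/
theorem lintegral_per_vol_covariogram
    (K : Set (EuclideanSpace ℝ (Fin 2))) (α : ℝ) (hα : 0 ≤ α)
    (hKne : K.Nonempty) (hKcp : IsCompact K) (hKcv : Convex ℝ K)
    (hKint : (interior K).Nonempty) :
    ∫⁻ x : EuclideanSpace ℝ (Fin 2),
        ENNReal.ofReal (per (K ∩ ((· + x) '' K)) + α * vol (K ∩ ((· + x) '' K)))
      = ENNReal.ofReal (vol K * (2 * per K + α * vol K)) := by
  classical
  have hKm : MeasurableSet K := hKcp.isClosed.measurableSet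
  have hFKm : MeasurableSet (frontier K) := isClosed_frontier.measurableSet
  have hfin : μH[1] (frontier K) ≠ ⊤ := (frontier_hausdorff_lt_top K hKcp hKcv hKint).ne
  have hvolK : volume K ≠ ⊤ := hKcp.measure_lt_top.ne
  set ν : Measure (EuclideanSpace ℝ (Fin 2)) := μH[1].restrict (frontier K) with hν
  haveI : IsFiniteMeasure ν := ⟨by rw [hν, Measure.restrict_apply_univ]; exact hfin.lt_top⟩
  set νK : Measure (EuclideanSpace ℝ (Fin 2)) := volume.restrict K with hνK
  haveI : IsFiniteMeasure νK := ⟨by rw [hνK, Measure.restrict_apply_univ]; exact hvolK.lt_top⟩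
  have himg : ∀ (T : Set (EuclideanSpace ℝ (Fin 2))) (x : EuclideanSpace ℝ (Fin 2)),
      (· + x) '' T = (fun y => y - x) ⁻¹' T := by
    intro T x; ext y
    constructor
    · rintro ⟨z, hz, rfl⟩; simpa using hz
    · intro h; exact ⟨y - x, h, sub_add_cancel y x⟩
  set g : EuclideanSpace ℝ (Fin 2) → ℝ≥0∞ := fun x =>
    ν ((fun y => y - x) ⁻¹' K) + ν ((fun y => y - (-x)) ⁻¹' K)
      + ENNReal.ofReal α * νK ((fun y => y - x) ⁻¹' K) with hg
  have hm1 : Measurable fun x : EuclideanSpace ℝ (Fin 2) => ν ((fun y => y - x) ⁻¹' K) :=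
    key_meas ν K hKm
  have hm2 : Measurable fun x : EuclideanSpace ℝ (Fin 2) => ν ((fun y => y - (-x)) ⁻¹' K) :=
    hm1.comp measurable_neg
  have hm3 : Measurable fun x : EuclideanSpace ℝ (Fin 2) =>
      ENNReal.ofReal α * νK ((fun y => y - x) ⁻¹' K) :=
    (key_meas νK K hKm).const_mul _
  -- for a.e. x, the frontiers of K and K + x intersect in a μH[1]-null set
  have hnullint : ∀ᵐ x : EuclideanSpace ℝ (Fin 2),
      ν ((fun y => y - x) ⁻¹' (frontier K)) = 0 := by
    have hmeasN := key_meas ν (frontier K) hFKm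
    have hz : ∫⁻ x, ν ((fun y => y - x) ⁻¹' (frontier K)) = 0 := by
      rw [key_tonelli ν (frontier K) hFKm, hKcv.addHaar_frontier volume, mul_zero]
    have := (lintegral_eq_zero_iff hmeasN).1 hz
    filter_upwards [this] with x hx
    simpa using hx
  -- pointwise identity for the integrand
  have hae : (fun x => ENNReal.ofReal
        (per (K ∩ ((· + x) '' K)) + α * vol (K ∩ ((· + x) '' K)))) =ᵐ[volume] g := by
    filter_upwards [hnullint] with x hx
    simp only [per, vol]
    have hpreFKm : MeasurableSet ((fun y => y - x) ⁻¹' (frontier K)) :=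
      (measurable_sub_const x) hFKm
    have hpreKm : MeasurableSet ((fun y => y - x) ⁻¹' K) := (measurable_sub_const x) hKm
    have hpreKm' : MeasurableSet ((fun y => y - (-x)) ⁻¹' K) := (measurable_sub_const (-x)) hKm
    set B : Set (EuclideanSpace ℝ (Fin 2)) := (· + x) '' K with hB
    have hBclosed : IsClosed B := (hKcp.image (continuous_add_right x)).isClosed
    have hBm : MeasurableSet B := hBclosed.measurableSet
    have hfrB : frontier B = (· + x) '' frontier K := frontier_image_addRight x K
    have hfrBm : MeasurableSet (frontier B) := isClosed_frontier.measurableSet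
    have hx0 : μH[1] (frontier K ∩ frontier B) = 0 := by
      rw [hν, Measure.restrict_apply hpreFKm] at hx
      rw [hfrB, himg (frontier K) x, inter_comm]
      exact hx
    have hdecomp : frontier (K ∩ B) = (frontier K ∩ B) ∪ (K ∩ frontier B) :=
      frontier_inter_closed K B hKcp.isClosed hBclosed
    have hsum : μH[1] (frontier (K ∩ B))
        = μH[1] (frontier K ∩ B) + μH[1] (K ∩ frontier B) := by
      have hinter : μH[1] ((frontier K ∩ B) ∩ (K ∩ frontier B)) = 0 := by
        refine measure_mono_null ?_ hx0
        rintro y ⟨⟨h1, _⟩, ⟨_, h4⟩⟩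
        exact ⟨h1, h4⟩
      have h := measure_union_add_inter (μ := μH[1]) (frontier K ∩ B) (hKm.inter hfrBm)
      rw [hinter, add_zero] at h
      rw [hdecomp, h]
    have hfin1 : μH[1] (frontier K ∩ B) ≠ ⊤ :=
      ((measure_mono inter_subset_left).trans_lt hfin.lt_top).ne
    have htransFK : μH[1] ((· + x) '' frontier K) = μH[1] (frontier K) :=
      hausdorff_translate x _ hFKm
    have hfin2 : μH[1] (K ∩ frontier B) ≠ ⊤ := by
      refine ((measure_mono inter_subset_right).trans_lt ?_).ne
      rw [hfrB, htransFK]; exact hfin.lt_top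
    have hfinfr : μH[1] (frontier (K ∩ B)) ≠ ⊤ := by
      rw [hsum]; exact ENNReal.add_ne_top.2 ⟨hfin1, hfin2⟩
    have hvolKB : volume (K ∩ B) ≠ ⊤ :=
      ((measure_mono inter_subset_left).trans_lt hvolK.lt_top).ne
    have hper : ENNReal.ofReal ((μH[1] (frontier (K ∩ B))).toReal) = μH[1] (frontier (K ∩ B)) :=
      ENNReal.ofReal_toReal hfinfr
    have hvol' : ENNReal.ofReal ((volume (K ∩ B)).toReal) = volume (K ∩ B) :=
      ENNReal.ofReal_toReal hvolKB
    have e1 : ν ((fun y => y - x) ⁻¹' K) = μH[1] (frontier K ∩ B) := by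
      rw [hν, Measure.restrict_apply hpreKm, hB, himg K x, inter_comm]
    have e2 : ν ((fun y => y - (-x)) ⁻¹' K) = μH[1] (K ∩ frontier B) := by
      rw [hν, Measure.restrict_apply hpreKm']
      have himgset : (· + (-x)) '' (K ∩ frontier B)
          = ((fun y => y - (-x)) ⁻¹' K) ∩ frontier K := by
        ext y
        simp only [hfrB, mem_image, mem_inter_iff, mem_preimage]
        constructor
        · rintro ⟨z, ⟨hz1, hz2⟩, rfl⟩
          constructor
          · have : z + -x - -x = z := by abel
            rw [this]; exact hz1
          · obtain ⟨w, hw, hwz⟩ := hz2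
            have : z + -x = w := by rw [← hwz]; abel
            rw [this]; exact hw
        · rintro ⟨h1, h2⟩
          refine ⟨y - -x, ⟨by simpa using h1, ⟨y, h2, by abel⟩⟩, by abel⟩
      rw [← hausdorff_translate (-x) (K ∩ frontier B) (hKm.inter hfrBm), himgset]
    have e3 : νK ((fun y => y - x) ⁻¹' K) = volume (K ∩ B) := by
      rw [hνK, Measure.restrict_apply hpreKm, hB, himg K x, inter_comm]
    calc ENNReal.ofReal ((μH[1] (frontier (K ∩ B))).toReal + α * (volume (K ∩ B)).toReal)
        = ENNReal.ofReal ((μH[1] (frontier (K ∩ B))).toReal)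
            + ENNReal.ofReal α * ENNReal.ofReal ((volume (K ∩ B)).toReal) := by
          rw [ENNReal.ofReal_add (ENNReal.toReal_nonneg)
            (mul_nonneg hα ENNReal.toReal_nonneg), ENNReal.ofReal_mul hα]
      _ = (μH[1] (frontier K ∩ B) + μH[1] (K ∩ frontier B))
            + ENNReal.ofReal α * volume (K ∩ B) := by rw [hper, hvol', hsum]
      _ = g x := by simp only [hg]; rw [e1, e2, e3]
  rw [lintegral_congr_ae hae]
  have hsplit : ∫⁻ x, g x
      = (∫⁻ x, ν ((fun y => y - x) ⁻¹' K)) + (∫⁻ x, ν ((fun y => y - (-x)) ⁻¹' K))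
        + ∫⁻ x, ENNReal.ofReal α * νK ((fun y => y - x) ⁻¹' K) := by
    simp only [hg]
    rw [lintegral_add_right _ hm3, lintegral_add_right _ hm2]
  have hI1 : ∫⁻ x, ν ((fun y => y - x) ⁻¹' K) = μH[1] (frontier K) * volume K := by
    rw [key_tonelli ν K hKm, hν, Measure.restrict_apply_univ]
  have hI2 : ∫⁻ x, ν ((fun y => y - (-x)) ⁻¹' K) = μH[1] (frontier K) * volume K := by
    rw [← hI1]
    exact (Measure.measurePreserving_neg volume).lintegral_comp hm1
  have hI3 : ∫⁻ x, ENNReal.ofReal α * νK ((fun y => y - x) ⁻¹' K)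
      = ENNReal.ofReal α * (volume K * volume K) := by
    rw [lintegral_const_mul _ (key_meas νK K hKm), key_tonelli νK K hKm, hνK,
      Measure.restrict_apply_univ]
  rw [hsplit, hI1, hI2, hI3]
  have h2 : ENNReal.ofReal (vol K * (2 * per K + α * vol K))
      = volume K * (2 * μH[1] (frontier K) + ENNReal.ofReal α * volume K) := by
    simp only [per, vol]
    rw [ENNReal.ofReal_mul ENNReal.toReal_nonneg, ENNReal.ofReal_toReal hvolK,
      ENNReal.ofReal_add (by positivity) (mul_nonneg hα ENNReal.toReal_nonneg),
      ENNReal.ofReal_mul (by norm_num : (0:ℝ) ≤ 2), ENNReal.ofReal_toReal hfin,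
      ENNReal.ofReal_mul hα, ENNReal.ofReal_toReal hvolK, ENNReal.ofReal_ofNat]
  rw [h2]; ring
end

section
/- Let K be a convex body in ℝ². Then the closure of the set {x ∈ ℝ² : per(K ∩ (K + x)) ≠ 0} equals the difference body K − K = {a − b : a, b ∈ K}. (Theorem 3.1(III) for the Euclidean perimeter: the support of the perimeter-covariogram of K is the difference body of K.) -/
open MeasureTheory Set
open scoped Pointwise RealInnerProductSpace ENNReal NNReal

noncomputable section

section Hilbert
variable {F : Type*} [NormedAddCommGroup F] [InnerProductSpace ℝ F] [CompleteSpace F]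

set_option linter.unusedSectionVars false
lemma exists_proj {C : Set F} (hne : C.Nonempty) (hcl : IsClosed C) (hcv : Convex ℝ C) (x : F) :
    ∃ p ∈ C, ∀ c ∈ C, ⟪x - p, c - p⟫ ≤ 0 := by
  obtain ⟨v, hv, heq⟩ := exists_norm_eq_iInf_of_complete_convex hne hcl.isComplete hcv x
  exact ⟨v, hv, (norm_eq_iInf_iff_real_inner_le_zero hcv hv).1 heq⟩

lemma proj_lip {P : F → F} {C : Set F}
    (hPmem : ∀ x, P x ∈ C) (hPle : ∀ x, ∀ c ∈ C, ⟪x - P x, c - P x⟫ ≤ 0) :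
    LipschitzWith 1 P := by
  apply LipschitzWith.of_dist_le_mul
  intro x y
  rw [NNReal.coe_one, one_mul, dist_eq_norm, dist_eq_norm]
  have A : ⟪x - P x, P y - P x⟫ ≤ 0 := hPle x (P y) (hPmem y)
  have B : ⟪y - P y, P x - P y⟫ ≤ 0 := hPle y (P x) (hPmem x)
  have hd : x - y = ((x - P x) - (y - P y)) + (P x - P y) := by abel
  have expand : ⟪x - y, P x - P y⟫ = ⟪x - P x, P x - P y⟫ - ⟪y - P y, P x - P y⟫
      + ‖P x - P y‖ ^ 2 := by
    rw [hd, inner_add_left, inner_sub_left, real_inner_self_eq_norm_sq]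
  have hA' : ⟪x - P x, P x - P y⟫ = -⟪x - P x, P y - P x⟫ := by
    rw [← inner_neg_right, neg_sub]
  have hcs : ⟪x - y, P x - P y⟫ ≤ ‖x - y‖ * ‖P x - P y‖ := real_inner_le_norm _ _
  nlinarith [norm_nonneg (P x - P y), norm_nonneg (x - y), sq_nonneg (‖P x - P y‖)]

lemma proj_eq {P : F → F} {C : Set F}
    (hPmem : ∀ x, P x ∈ C) (hPle : ∀ x, ∀ c ∈ C, ⟪x - P x, c - P x⟫ ≤ 0)
    {z y : F} (hy : y ∈ C) (hvi : ∀ c ∈ C, ⟪z - y, c - y⟫ ≤ 0) : P z = y := by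
  have A : ⟪z - P z, y - P z⟫ ≤ 0 := hPle z y hy
  have B : ⟪z - y, P z - y⟫ ≤ 0 := hvi (P z) (hPmem z)
  have hd : y - P z = (z - P z) - (z - y) := by abel
  have : ‖y - P z‖ ^ 2 = ⟪z - P z, y - P z⟫ - ⟪z - y, y - P z⟫ := by
    rw [← inner_sub_left, ← hd, real_inner_self_eq_norm_sq]
  have h2 : ⟪z - y, y - P z⟫ = -⟪z - y, P z - y⟫ := by rw [← inner_neg_right, neg_sub]
  have : ‖y - P z‖ ^ 2 ≤ 0 := by nlinarith
  have : ‖y - P z‖ = 0 := by nlinarith [norm_nonneg (y - P z), sq_nonneg (‖y - P z‖)]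
  exact (norm_sub_eq_zero_iff.mp this).symm

lemma subset_closure_interior' {C : Set F} (hcv : Convex ℝ C)
    (hint : (interior C).Nonempty) : C ⊆ closure (interior C) := by
  obtain ⟨a, ha⟩ := hint
  intro c hc
  have hcont : Continuous fun t : ℝ => c + t • (a - c) := by fun_prop
  have h := hcont.tendsto (0:ℝ)
  simp only [zero_smul, add_zero] at h
  have h2 : Filter.Tendsto (fun t : ℝ => c + t • (a - c)) (nhdsWithin 0 (Ioi 0)) (nhds c) :=
    h.mono_left nhdsWithin_le_nhds
  refine mem_closure_of_tendsto h2 ?_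
  filter_upwards [Ioc_mem_nhdsGT_of_mem (Set.left_mem_Ico.2 one_pos)] with t ht
  exact hcv.add_smul_sub_mem_interior hc ha ht

lemma frontier_subset_proj_sphere {C : Set F} (hcp : IsCompact C) (hcv : Convex ℝ C)
    (hint : (interior C).Nonempty) {P : F → F}
    (hPmem : ∀ x, P x ∈ C) (hPle : ∀ x, ∀ c ∈ C, ⟪x - P x, c - P x⟫ ≤ 0)
    {R : ℝ} (hR : ∀ c ∈ C, ‖c‖ < R) :
    frontier C ⊆ P '' Metric.sphere 0 R := by
  have hproj_eq : ∀ {z y : F}, y ∈ C → (∀ c ∈ C, ⟪z - y, c - y⟫ ≤ 0) → P z = y := by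
    intro z y hy hvi
    have A : ⟪z - P z, y - P z⟫ ≤ 0 := hPle z y hy
    have B : ⟪z - y, P z - y⟫ ≤ 0 := hvi (P z) (hPmem z)
    have hd : y - P z = z - P z - (z - y) := by abel
    have h1 : ‖y - P z‖ ^ 2 = ⟪z - P z, y - P z⟫ - ⟪z - y, y - P z⟫ := by
      rw [← inner_sub_left, ← hd, real_inner_self_eq_norm_sq]
    have h2 : ⟪z - y, y - P z⟫ = -⟪z - y, P z - y⟫ := by rw [← inner_neg_right, neg_sub]
    have h3 : ‖y - P z‖ = 0 := by nlinarith [norm_nonneg (y - P z)]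
    exact (norm_sub_eq_zero_iff.mp h3).symm
  intro y hy
  rw [frontier, hcp.isClosed.closure_eq] at hy
  obtain ⟨hyC, hyni⟩ := hy
  obtain ⟨f, hf⟩ := geometric_hahn_banach_open_point hcv.interior isOpen_interior hyni
  have hfC : ∀ c ∈ C, f c ≤ f y := fun c hc =>
    closure_minimal (fun a ha => (hf a ha).le)
      (isClosed_le f.continuous continuous_const) (subset_closure_interior' hcv hint hc)
  set v := (InnerProductSpace.toDual ℝ F).symm f with hvdef
  have hvapp : ∀ z, ⟪v, z⟫ = f z := fun z => InnerProductSpace.toDual_symm_apply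
  have hvne : v ≠ 0 := by
    obtain ⟨a, ha⟩ := hint
    intro h0
    have h1 := hf a ha
    rw [← hvapp a, ← hvapp y, h0] at h1
    simp at h1
  set u := ‖v‖⁻¹ • v with hu
  have hun : ‖u‖ = 1 := by
    rw [hu, norm_smul, norm_inv, norm_norm, inv_mul_cancel₀ (norm_ne_zero_iff.2 hvne)]
  have hyR : ‖y‖ < R := hR y hyC
  have hy0 : (0:ℝ) ≤ R + ‖y‖ := by nlinarith [norm_nonneg y]
  have hg : Continuous fun t : ℝ => ‖y + t • u‖ := by fun_prop
  have hgT : R ≤ ‖y + (R + ‖y‖) • u‖ := by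
    have h1 : ‖(R + ‖y‖) • u‖ = R + ‖y‖ := by
      rw [norm_smul, hun, mul_one, Real.norm_eq_abs, abs_of_nonneg hy0]
    have h2 : ‖(R + ‖y‖) • u‖ ≤ ‖y + (R + ‖y‖) • u‖ + ‖y‖ := by
      have := norm_sub_le (y + (R + ‖y‖) • u) y
      simpa using this
    linarith
  obtain ⟨t, htmem, ht⟩ := intermediate_value_Icc hy0 hg.continuousOn
    (by constructor <;> simp [hyR.le, hgT] : R ∈ Icc ‖y + (0:ℝ) • u‖ ‖y + (R + ‖y‖) • u‖)
  refine ⟨y + t • u, ?_, ?_⟩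
  · simpa [mem_sphere_iff_norm] using ht
  · apply hproj_eq hyC
    intro c hc
    have hzy : y + t • u - y = t • u := by abel
    rw [hzy, hu, smul_smul, real_inner_smul_left]
    have h3 : ⟪v, c - y⟫ ≤ 0 := by
      rw [hvapp]
      simpa [map_sub] using sub_nonpos.2 (hfC c hc)
    have h4 : (0:ℝ) ≤ t * ‖v‖⁻¹ := by
      have : (0:ℝ) ≤ t := htmem.1
      positivity
    exact mul_nonpos_of_nonneg_of_nonpos h4 h3

end Hilbert

section Plane
open Real
noncomputable abbrev circ (R : ℝ) : ℝ → EuclideanSpace ℝ (Fin 2) :=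
  fun θ => (WithLp.equiv 2 (Fin 2 → ℝ)).symm ![R * Real.cos θ, R * Real.sin θ]

lemma norm_sq_coords (x : EuclideanSpace ℝ (Fin 2)) : x 0 ^ 2 + x 1 ^ 2 = ‖x‖ ^ 2 := by
  rw [EuclideanSpace.norm_eq, Real.sq_sqrt (by positivity)]
  simp [Fin.sum_univ_two, sq_abs]

lemma sphere_subset_circ {R : ℝ} (hR : 0 < R) :
    Metric.sphere (0 : EuclideanSpace ℝ (Fin 2)) R ⊆ circ R '' Icc 0 (2 * π) := by
  intro x hx
  have hxn : ‖x‖ = R := by simpa [mem_sphere_iff_norm] using hx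
  set a := x 0 with hadef
  set b := x 1 with hbdef
  have hab : a ^ 2 + b ^ 2 = R ^ 2 := by rw [hadef, hbdef, norm_sq_coords, hxn]
  have ha1 : -1 ≤ a / R := by rw [le_div_iff₀ hR]; nlinarith [sq_nonneg b, sq_nonneg (a + R)]
  have ha2 : a / R ≤ 1 := by rw [div_le_one hR]; nlinarith [sq_nonneg b, sq_nonneg (a - R)]
  have hcos : Real.cos (Real.arccos (a / R)) = a / R := Real.cos_arccos ha1 ha2
  have hsin : R * Real.sin (Real.arccos (a / R)) = |b| := by
    rw [Real.sin_arccos]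
    rw [show R * √(1 - (a / R) ^ 2) = √(R ^ 2 * (1 - (a / R) ^ 2)) by
      rw [Real.sqrt_mul (by positivity), Real.sqrt_sq hR.le]]
    rw [show R ^ 2 * (1 - (a / R) ^ 2) = b ^ 2 by field_simp; nlinarith]
    exact Real.sqrt_sq_eq_abs b
  have hRcos : R * (a / R) = a := by field_simp
  rcases le_or_gt 0 b with hb | hb
  · refine ⟨Real.arccos (a / R), ⟨Real.arccos_nonneg _, ?_⟩, ?_⟩
    · have := Real.arccos_le_pi (a / R); nlinarith [Real.pi_pos]
    · ext i
      fin_cases i <;>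
        simp [circ, WithLp.equiv_symm_apply, hcos, hRcos, hsin, abs_of_nonneg hb,
          ← hadef, ← hbdef]
  · refine ⟨2 * π - Real.arccos (a / R), ⟨?_, ?_⟩, ?_⟩
    · have := Real.arccos_le_pi (a / R); nlinarith [Real.pi_pos]
    · have := Real.arccos_nonneg (a / R); linarith
    · ext i
      have h1 : R * Real.sin (2 * π - Real.arccos (a / R)) = b := by
        rw [Real.sin_two_pi_sub]
        rw [show R * -Real.sin (Real.arccos (a / R)) = -(R * Real.sin (Real.arccos (a / R))) by
          ring]
        rw [hsin, abs_of_neg hb, neg_neg]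
      fin_cases i <;>
        simp [circ, WithLp.equiv_symm_apply, Real.cos_two_pi_sub, hcos, hRcos, h1, hsin,
          abs_of_neg hb, ← hadef, ← hbdef]


lemma lip_cos : LipschitzWith 1 Real.cos := by
  apply lipschitzWith_of_nnnorm_deriv_le Real.differentiable_cos
  intro x
  simp [Real.deriv_cos]
  exact abs_le.mpr ⟨Real.neg_one_le_sin x, Real.sin_le_one x⟩

lemma lip_sin : LipschitzWith 1 Real.sin := by
  apply lipschitzWith_of_nnnorm_deriv_le Real.differentiable_sin
  intro x
  simp [Real.deriv_sin]
  exact abs_le.mpr ⟨Real.neg_one_le_cos x, Real.cos_le_one x⟩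

lemma circ_lip {R : ℝ} (hR : 0 ≤ R) : LipschitzWith (2 * R).toNNReal (circ R) := by
  apply LipschitzWith.of_dist_le_mul
  intro θ φ
  have hc : |Real.cos θ - Real.cos φ| ≤ dist θ φ := by
    have := lip_cos.dist_le_mul θ φ
    simpa [Real.dist_eq] using this
  have hs : |Real.sin θ - Real.sin φ| ≤ dist θ φ := by
    have := lip_sin.dist_le_mul θ φ
    simpa [Real.dist_eq] using this
  have hco : Real.toNNReal (2 * R) = ((2 * R : ℝ) : ℝ) ⊔ 0 := rfl
  have hcoe : ((2 * R).toNNReal : ℝ) = 2 * R := Real.coe_toNNReal _ (by positivity)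
  rw [hcoe, EuclideanSpace.dist_eq]
  have h0 : dist (circ R θ 0) (circ R φ 0) = |R * Real.cos θ - R * Real.cos φ| := by
    simp [circ, WithLp.equiv_symm_apply, Real.dist_eq]
  have h1 : dist (circ R θ 1) (circ R φ 1) = |R * Real.sin θ - R * Real.sin φ| := by
    simp [circ, WithLp.equiv_symm_apply, Real.dist_eq]
  rw [Fin.sum_univ_two, h0, h1]
  have hb0 : |R * Real.cos θ - R * Real.cos φ| ≤ R * dist θ φ := by
    rw [← mul_sub, abs_mul, abs_of_nonneg hR]
    exact mul_le_mul_of_nonneg_left hc hR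
  have hb1 : |R * Real.sin θ - R * Real.sin φ| ≤ R * dist θ φ := by
    rw [← mul_sub, abs_mul, abs_of_nonneg hR]
    exact mul_le_mul_of_nonneg_left hs hR
  have hnn : (0:ℝ) ≤ 2 * R * dist θ φ := by positivity
  rw [show 2 * R * dist θ φ = Real.sqrt ((2 * R * dist θ φ) ^ 2) from
    (Real.sqrt_sq hnn).symm]
  apply Real.sqrt_le_sqrt
  nlinarith [abs_nonneg (R * Real.cos θ - R * Real.cos φ),
    abs_nonneg (R * Real.sin θ - R * Real.sin φ), dist_nonneg (x := θ) (y := φ), sq_nonneg (R * dist θ φ)]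

lemma coord_lip (i : Fin 2) : LipschitzWith 1 (fun x : EuclideanSpace ℝ (Fin 2) => x i) := by
  apply LipschitzWith.of_dist_le_mul
  intro x y
  rw [NNReal.coe_one, one_mul, EuclideanSpace.dist_eq]
  rw [Real.dist_eq]
  have h1 : |x i - y i| = Real.sqrt (dist (x i) (y i) ^ 2) := by
    rw [Real.sqrt_sq_eq_abs, Real.dist_eq, abs_abs]
  rw [h1]
  apply Real.sqrt_le_sqrt
  exact Finset.single_le_sum (f := fun j => dist (x j) (y j) ^ 2)
    (fun j _ => sq_nonneg _) (Finset.mem_univ i)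

noncomputable abbrev pt2 (t y : ℝ) : EuclideanSpace ℝ (Fin 2) :=
  (WithLp.equiv 2 (Fin 2 → ℝ)).symm ![t, y]

lemma pt2_apply_zero (t y : ℝ) : pt2 t y 0 = t := by
  simp [pt2, WithLp.equiv_symm_apply]

lemma pt2_apply_one (t y : ℝ) : pt2 t y 1 = y := by
  simp [pt2, WithLp.equiv_symm_apply]

lemma pt2_eta (x : EuclideanSpace ℝ (Fin 2)) : pt2 (x 0) (x 1) = x := by
  ext i
  fin_cases i <;> simp [pt2, WithLp.equiv_symm_apply]

lemma pt2_continuous (t : ℝ) : Continuous fun y => pt2 t y := by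
  apply Continuous.comp (PiLp.continuous_toLp 2 (fun _ : Fin 2 => ℝ))
  apply continuous_pi
  intro i
  fin_cases i <;> simp <;> [exact continuous_const; exact continuous_id]

lemma pt2_dist (t y y' : ℝ) : dist (pt2 t y) (pt2 t y') = |y - y'| := by
  rw [EuclideanSpace.dist_eq, Fin.sum_univ_two, pt2_apply_zero, pt2_apply_one,
    pt2_apply_zero, pt2_apply_one]
  simp [Real.dist_eq, Real.sqrt_sq_eq_abs]

lemma pt2_dist' (t t' y : ℝ) : dist (pt2 t y) (pt2 t' y) = |t - t'| := by
  rw [EuclideanSpace.dist_eq, Fin.sum_univ_two, pt2_apply_zero, pt2_apply_one,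
    pt2_apply_zero, pt2_apply_one]
  simp [Real.dist_eq, Real.sqrt_sq_eq_abs]

lemma abs_coord_le_norm (x : EuclideanSpace ℝ (Fin 2)) (i : Fin 2) : |x i| ≤ ‖x‖ := by
  have h : x 0 ^ 2 + x 1 ^ 2 = ‖x‖ ^ 2 := by
    rw [EuclideanSpace.norm_eq, Real.sq_sqrt (by positivity)]
    simp [Fin.sum_univ_two, sq_abs]
  fin_cases i
  · show |x 0| ≤ ‖x‖
    nlinarith [abs_nonneg (x 0), norm_nonneg x, sq_abs (x 0), sq_nonneg (x 1)]
  · show |x 1| ≤ ‖x‖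
    nlinarith [abs_nonneg (x 1), norm_nonneg x, sq_abs (x 1), sq_nonneg (x 0)]

/-- Every value attained by the first coordinate on `C` is attained on the frontier. -/
lemma exists_frontier_coord {C : Set (EuclideanSpace ℝ (Fin 2))} (hcp : IsCompact C)
    {t : ℝ} (hts : ∃ z ∈ C, z 0 = t) : ∃ w ∈ frontier C, w 0 = t := by
  obtain ⟨M, hM⟩ := hcp.isBounded.subset_closedBall 0
  set T := {y : ℝ | pt2 t y ∈ C} with hT
  obtain ⟨z, hz, hz0⟩ := hts
  have hzT : z 1 ∈ T := by
    simp only [hT, mem_setOf_eq, ← hz0, pt2_eta]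
    exact hz
  have hTne : T.Nonempty := ⟨z 1, hzT⟩
  have hTbdd : BddAbove T := by
    refine ⟨M, fun y hy => ?_⟩
    have h1 : ‖pt2 t y‖ ≤ M := by
      simpa [Metric.mem_closedBall, dist_eq_norm] using hM hy
    have h2 := abs_coord_le_norm (pt2 t y) 1
    rw [pt2_apply_one] at h2
    exact le_trans (le_abs_self y) (le_trans h2 h1)
  have hTcl : IsClosed T := IsClosed.preimage (pt2_continuous t) hcp.isClosed
  set y₀ := sSup T with hy₀
  have hy₀T : y₀ ∈ T := hTcl.csSup_mem hTne hTbdd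
  refine ⟨pt2 t y₀, ?_, pt2_apply_zero t y₀⟩
  rw [frontier, hcp.isClosed.closure_eq]
  refine ⟨hy₀T, fun hint => ?_⟩
  rw [mem_interior_iff_mem_nhds, Metric.mem_nhds_iff] at hint
  obtain ⟨ε, hε, hball⟩ := hint
  have hmem : pt2 t (y₀ + ε / 2) ∈ C := by
    apply hball
    rw [Metric.mem_ball, pt2_dist]
    rw [show y₀ + ε / 2 - y₀ = ε / 2 by ring, abs_of_pos (by linarith)]
    linarith
  have : y₀ + ε / 2 ≤ y₀ := le_csSup hTbdd hmem
  linarith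

end Plane

lemma perim_pos_ne_top {C : Set (EuclideanSpace ℝ (Fin 2))} (hne : C.Nonempty)
    (hcp : IsCompact C) (hcv : Convex ℝ C) (hint : (interior C).Nonempty) :
    μH[1] (frontier C) ≠ 0 ∧ μH[1] (frontier C) ≠ ⊤ := by
  constructor
  · obtain ⟨a, ha⟩ := hint
    obtain ⟨ε, hε, hball⟩ := Metric.isOpen_iff.1 isOpen_interior a ha
    have hsub : Ioo (a 0 - ε) (a 0 + ε) ⊆ (fun x : EuclideanSpace ℝ (Fin 2) => x 0) '' frontier C := by
      intro t ht
      have hz : pt2 t (a 1) ∈ C := by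
        apply interior_subset
        apply hball
        rw [Metric.mem_ball]
        have hd : dist (pt2 t (a 1)) a = |t - a 0| := by
          conv_lhs => rw [← pt2_eta a]
          exact pt2_dist' t (a 0) (a 1)
        rw [hd, abs_sub_lt_iff]
        constructor <;> [linarith [ht.2]; linarith [ht.1]]
      obtain ⟨w, hw, hw0⟩ := exists_frontier_coord hcp ⟨pt2 t (a 1), hz, pt2_apply_zero t _⟩
      exact ⟨w, hw, hw0⟩
    have h1 : μH[1] ((fun x : EuclideanSpace ℝ (Fin 2) => x 0) '' frontier C)
        ≤ μH[1] (frontier C) := by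
      have := (coord_lip 0).hausdorffMeasure_image_le (zero_le_one) (frontier C)
      simpa using this
    have h2 : (μH[1] (Ioo (a 0 - ε) (a 0 + ε) : Set ℝ)) ≤
        μH[1] ((fun x : EuclideanSpace ℝ (Fin 2) => x 0) '' frontier C) :=
      measure_mono hsub
    have h3 : (μH[1] (Ioo (a 0 - ε) (a 0 + ε) : Set ℝ)) ≠ 0 := by
      rw [MeasureTheory.hausdorffMeasure_real, Real.volume_Ioo]
      simp only [ne_eq, ENNReal.ofReal_eq_zero, not_le]
      linarith
    intro h0
    rw [h0] at h1
    exact h3 (le_antisymm (le_trans h2 h1) zero_le)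
  · obtain ⟨r, hr⟩ := hcp.isBounded.subset_closedBall 0
    set R := |r| + 1 with hRdef
    have hR0 : (0:ℝ) < R := by positivity
    have hRC : ∀ c ∈ C, ‖c‖ < R := by
      intro c hc
      have := hr hc
      rw [Metric.mem_closedBall, dist_zero_right] at this
      calc ‖c‖ ≤ r := this
        _ ≤ |r| := le_abs_self r
        _ < R := by rw [hRdef]; linarith
    choose P hP1 hP2 using fun x => exists_proj hne hcp.isClosed hcv x
    have hlipP : LipschitzWith 1 P := proj_lip hP1 hP2
    have hcover := frontier_subset_proj_sphere hcp hcv hint hP1 hP2 hRC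
    have hsphere := sphere_subset_circ hR0
    have hcomp : frontier C ⊆ (P ∘ circ R) '' (Icc 0 (2 * Real.pi)) := by
      intro y hy
      obtain ⟨z, hz, rfl⟩ := hcover hy
      obtain ⟨θ, hθ, rfl⟩ := hsphere hz
      exact ⟨θ, hθ, rfl⟩
    have hlip : LipschitzWith (1 * (2 * R).toNNReal) (P ∘ circ R) :=
      hlipP.comp (circ_lip hR0.le)
    have hb := hlip.hausdorffMeasure_image_le (zero_le_one) (Icc 0 (2 * Real.pi))
    have hIcc : μH[1] (Icc (0:ℝ) (2 * Real.pi)) = ENNReal.ofReal (2 * Real.pi) := by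
      rw [MeasureTheory.hausdorffMeasure_real, Real.volume_Icc, sub_zero]
    intro htop
    have hle := le_trans (measure_mono hcomp) hb
    rw [htop, hIcc] at hle
    exact (ENNReal.mul_ne_top (by simp [ENNReal.rpow_one]) ENNReal.ofReal_ne_top)
      (top_le_iff.mp hle)

end

/-- The support of the perimeter-covariogram of a planar convex body `K` is the
difference body `K − K`. -/
theorem support_perimeter_covariogram_eq_difference_body
    (K : Set (EuclideanSpace ℝ (Fin 2)))
    (hKne : K.Nonempty) (hKcp : IsCompact K) (hKcv : Convex ℝ K)
    (hKint : (interior K).Nonempty) :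
    closure {x : EuclideanSpace ℝ (Fin 2) | per (K ∩ ((· + x) '' K)) ≠ 0} = K - K := by
  set S := {x : EuclideanSpace ℝ (Fin 2) | per (K ∩ ((· + x) '' K)) ≠ 0} with hS
  have hKKcl : IsClosed (K - K) := by
    have h : IsCompact (K - K) := by
      rw [sub_eq_add_neg]
      exact hKcp.add hKcp.neg
    exact h.isClosed
  have hSsub : S ⊆ K - K := by
    intro x hx
    by_contra hxKK
    apply hx
    have hempty : K ∩ ((· + x) '' K) = ∅ := by
      ext y
      simp only [mem_inter_iff, mem_image, mem_empty_iff_false, iff_false, not_and]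
      rintro hyK ⟨k, hkK, rfl⟩
      exact hxKK ⟨k + x, hyK, k, hkK, by rw [add_comm]; exact add_sub_cancel_right x k⟩
    show per (K ∩ ((· + x) '' K)) = 0
    rw [hempty]
    simp [per]
  have hIsub : interior K - interior K ⊆ S := by
    rintro x ⟨a, ha, b, hb, rfl⟩
    set C := K ∩ ((· + (a - b)) '' K) with hC
    have himgcp : IsCompact ((· + (a - b)) '' K) := hKcp.image (by fun_prop)
    have hCcp : IsCompact C := hKcp.inter_right himgcp.isClosed
    have himgcv : Convex ℝ ((· + (a - b)) '' K) := by
      have he : ((· + (a - b)) '' K) = (fun z => (a - b) + z) '' K := by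
        apply image_congr
        intro k _
        exact add_comm k (a - b)
      rw [he]
      exact hKcv.translate (a - b)
    have hCcv : Convex ℝ C := (hKcv.inter himgcv)
    have haC : a ∈ interior C := by
      have h2 : a ∈ (· + (a - b)) '' interior K := ⟨b, hb, by show b + (a - b) = a; rw [add_comm, sub_add_cancel]⟩
      have hopen : IsOpen ((· + (a - b)) '' interior K) := by
        have := (Homeomorph.addRight (a - b)).isOpenMap (interior K) isOpen_interior
        simpa using this
      have hsub2 : interior K ∩ ((· + (a - b)) '' interior K) ⊆ C :=
        inter_subset_inter interior_subset (image_mono interior_subset)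
      exact interior_maximal hsub2 (isOpen_interior.inter hopen) ⟨ha, h2⟩
    have hfacts := perim_pos_ne_top ⟨a, interior_subset haC⟩ hCcp hCcv ⟨a, haC⟩
    show per C ≠ 0
    rw [per]
    exact ENNReal.toReal_ne_zero.mpr hfacts
  apply subset_antisymm
  · exact closure_minimal hSsub hKKcl
  · rintro p ⟨a, ha, b, hb, rfl⟩
    have h1 : a ∈ closure (interior K) := subset_closure_interior' hKcv hKint ha
    have h2 : b ∈ closure (interior K) := subset_closure_interior' hKcv hKint hb
    have h3 : a - b ∈ closure (interior K - interior K) := by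
      rw [mem_closure_iff_seq_limit] at h1 h2 ⊢
      obtain ⟨u, hu, hul⟩ := h1
      obtain ⟨v, hv, hvl⟩ := h2
      exact ⟨fun n => u n - v n, fun n => ⟨u n, hu n, v n, hv n, rfl⟩, hul.sub hvl⟩
    exact closure_mono hIsub h3
end
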